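/- The Minkowski function G, restricted to the set E9 of continued fractions with partial quotients in {1,...,9}, maps E9 bijectively onto the self-similar set Δ0 that is the attractor of the IFS {y ↦ 2/2^k − y/2^k : k = 1,...,9}, i.e., G(E9) = Δ0. -/

import Mathlib

open Filter Topology

/-- Partial sum `a 0 + ... + a n` of a digit sequence. -/
noncomputable def psum (a : ℕ → ℕ) (n : ℕ) : ℕ := ∑ i ∈ Finset.range (n + 1), a i

/-- Value of the alternating series `Σ_{n≥1} 2(-1)^{n-1}/2^{a1+...+an}`. -/
noncomputable def val (a : ℕ → ℕ) : ℝ := ∑' n : ℕ, (2 * (-1 : ℝ) ^ n) / 2 ^ (psum a n)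

/-- The set `Δ0` of all values of the alternating series over `K`-valued digit sequences. -/
noncomputable def Delta0 (K : Set ℕ) : Set ℝ :=
  { y | ∃ a : ℕ → ℕ, (∀ i, a i ∈ K) ∧ y = val a }

/-- Value of the finite continued fraction [0; a 0, a 1, ..., a (n-1)]. -/
noncomputable def finCF : ℕ → (ℕ → ℕ) → ℝ
  | 0, _ => 0
  | n + 1, a => 1 / (a 0 + finCF n (fun i => a (i + 1)))

/-- The set of reals whose continued fraction expansion has all partial quotients in {1,...,9}. -/
noncomputable def E9 : Set ℝ :=
  { x | ∃ a : ℕ → ℕ, (∀ i, a i ∈ Finset.Icc 1 9) ∧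
      Tendsto (fun n => finCF n a) atTop (𝓝 x) }

/-- The value of the Minkowski series for a digit sequence. -/
noncomputable def Gval (a : ℕ → ℕ) : ℝ :=
  ∑' n : ℕ, (-1 : ℝ) ^ n * (2 : ℝ) ^ ((1 : ℤ) - (psum a n : ℤ))

open Classical in
/-- The Minkowski question-mark function, defined via a choice of continued fraction
expansion (and 0 off the set of such reals). -/
noncomputable def G (x : ℝ) : ℝ :=
  if h : ∃ a : ℕ → ℕ, (∀ i, a i ∈ Finset.Icc 1 9) ∧
      Tendsto (fun n => finCF n a) atTop (𝓝 x) then Gval h.choose else 0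

def Good (a : ℕ → ℕ) : Prop := ∀ i, a i ∈ Finset.Icc 1 9

def sh (a : ℕ → ℕ) : ℕ → ℕ := fun i => a (i + 1)

lemma Good.sh (ha : Good a) : Good (sh a) := fun i => ha (i + 1)

lemma Good.one_le (ha : Good a) (i : ℕ) : 1 ≤ a i := (Finset.mem_Icc.1 (ha i)).1
lemma Good.le_nine (ha : Good a) (i : ℕ) : a i ≤ 9 := (Finset.mem_Icc.1 (ha i)).2

lemma psum_zero (a : ℕ → ℕ) : psum a 0 = a 0 := by simp [psum]

lemma psum_shift (a : ℕ → ℕ) (n : ℕ) : psum a (n + 1) = psum (sh a) n + a 0 := by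
  simpa [psum, sh] using Finset.sum_range_succ' a (n + 1)

lemma psum_ge (ha : Good a) (n : ℕ) : n + 1 ≤ psum a n := by
  calc n + 1 = ∑ _i ∈ Finset.range (n + 1), 1 := by simp
  _ ≤ psum a n := Finset.sum_le_sum fun i _ => ha.one_le i

lemma term_abs (a : ℕ → ℕ) (n : ℕ) :
    |(-1 : ℝ) ^ n * (2 : ℝ) ^ ((1 : ℤ) - (psum a n : ℤ))| = (2 : ℝ) ^ ((1 : ℤ) - (psum a n : ℤ)) := by
  rw [abs_mul, abs_pow, abs_neg, abs_one, one_pow, one_mul, abs_of_pos (zpow_pos two_pos _)]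

lemma term_le (ha : Good a) (n : ℕ) :
    (2 : ℝ) ^ ((1 : ℤ) - (psum a n : ℤ)) ≤ (1 / 2 : ℝ) ^ n := by
  have h1 : ((1 : ℤ) - (psum a n : ℤ)) ≤ -(n : ℤ) := by
    have := psum_ge ha n
    omega
  calc (2 : ℝ) ^ ((1 : ℤ) - (psum a n : ℤ)) ≤ (2 : ℝ) ^ (-(n : ℤ)) :=
        zpow_le_zpow_right₀ one_le_two h1
  _ = (1 / 2 : ℝ) ^ n := by
        rw [zpow_neg, ← zpow_natCast, ← inv_zpow, zpow_natCast]; norm_num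

lemma Gval_summable (ha : Good a) :
    Summable (fun n : ℕ => (-1 : ℝ) ^ n * (2 : ℝ) ^ ((1 : ℤ) - (psum a n : ℤ))) := by
  apply Summable.of_norm_bounded (summable_geometric_of_lt_one (by norm_num) (by norm_num : (1/2:ℝ) < 1))
  intro n
  rw [Real.norm_eq_abs, term_abs]
  exact term_le ha n

lemma Gval_abs_le (ha : Good a) : |Gval a| ≤ 2 := by
  have hg : Summable (fun n : ℕ => (1/2:ℝ)^n) :=
    summable_geometric_of_lt_one (by norm_num) (by norm_num)
  have hn : Summable (fun n : ℕ => ‖(-1 : ℝ) ^ n * (2 : ℝ) ^ ((1 : ℤ) - (psum a n : ℤ))‖) := by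
    apply hg.of_nonneg_of_le (fun n => norm_nonneg _)
    intro n; rw [Real.norm_eq_abs, term_abs]; exact term_le ha n
  have h2 : ∑' n : ℕ, (1/2:ℝ)^n = 2 := by
    rw [tsum_geometric_of_lt_one (by norm_num) (by norm_num)]; norm_num
  calc |Gval a| ≤ ∑' n : ℕ, ‖(-1 : ℝ) ^ n * (2 : ℝ) ^ ((1 : ℤ) - (psum a n : ℤ))‖ :=
        norm_tsum_le_tsum_norm hn
  _ ≤ ∑' n : ℕ, (1/2:ℝ)^n := by
        apply Summable.tsum_le_tsum _ hn hg
        intro n; rw [Real.norm_eq_abs, term_abs]; exact term_le ha n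
  _ = 2 := h2

lemma two_zpow_one_sub (k : ℕ) : (2:ℝ) ^ ((1:ℤ) - (k:ℤ)) = 2 / 2 ^ k := by
  rw [zpow_sub₀ (two_ne_zero), zpow_one, zpow_natCast]

lemma two_zpow_neg (k : ℕ) : (2:ℝ) ^ (-(k:ℤ)) = 1 / 2 ^ k := by
  rw [zpow_neg, zpow_natCast, one_div]

lemma Gval_rec (ha : Good a) :
    Gval a = 2 / 2 ^ (a 0) - Gval (sh a) / 2 ^ (a 0) := by
  have hs := Gval_summable ha
  have h0 : Gval a = ((-1:ℝ)^0 * 2 ^ ((1:ℤ) - (psum a 0:ℤ))) +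
      ∑' n : ℕ, ((-1:ℝ)^(n+1) * 2 ^ ((1:ℤ) - (psum a (n+1):ℤ))) := Summable.tsum_eq_zero_add hs
  have h1 : ∀ n : ℕ, ((-1:ℝ)^(n+1) * 2 ^ ((1:ℤ) - (psum a (n+1):ℤ)))
      = -((2:ℝ)^(-(a 0:ℤ)) * ((-1:ℝ)^n * 2 ^ ((1:ℤ) - (psum (sh a) n:ℤ)))) := by
    intro n
    rw [psum_shift]
    have he : (1:ℤ) - ((psum (sh a) n + a 0 : ℕ):ℤ)
        = (-(a 0:ℤ)) + ((1:ℤ) - (psum (sh a) n:ℤ)) := by push_cast; ring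
    rw [he, zpow_add₀ two_ne_zero, pow_succ]
    ring
  rw [h0, tsum_congr h1, tsum_neg, tsum_mul_left]
  rw [pow_zero, one_mul, psum_zero, two_zpow_one_sub, two_zpow_neg]
  show _ = 2 / 2 ^ a 0 - Gval (sh a) / 2 ^ a 0
  rw [Gval]
  ring

lemma pow_pos' (k : ℕ) : (0:ℝ) < 2 ^ k := by positivity

lemma two_le_pow (hk : 1 ≤ k) : (2:ℝ) ≤ 2 ^ k := by
  calc (2:ℝ) = 2 ^ 1 := (pow_one 2).symm
  _ ≤ 2 ^ k := pow_le_pow_right₀ one_le_two hk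

lemma Gval_nonneg (ha : Good a) : 0 ≤ Gval a := by
  rw [Gval_rec ha]
  have h : Gval (sh a) ≤ 2 := (abs_le.1 (Gval_abs_le ha.sh)).2
  have h2 : Gval (sh a) / 2 ^ (a 0) ≤ 2 / 2 ^ (a 0) := by gcongr
  linarith

lemma Gval_le (ha : Good a) : Gval a ≤ 2 / 2 ^ (a 0) := by
  rw [Gval_rec ha]
  have h := Gval_nonneg ha.sh
  have hp := pow_pos' (a 0)
  nlinarith [div_nonneg h (le_of_lt hp)]

lemma Gval_ge (ha : Good a) : 1 / 2 ^ (a 0) ≤ Gval a := by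
  rw [Gval_rec ha, ← sub_div]
  have h1 : Gval (sh a) ≤ 1 := by
    calc Gval (sh a) ≤ 2 / 2 ^ (sh a 0) := Gval_le ha.sh
    _ ≤ 2 / 2 := by gcongr; exact two_le_pow (ha.sh.one_le 0)
    _ = 1 := by norm_num
  gcongr
  linarith

lemma Gval_lt (ha : Good a) : Gval a < 2 / 2 ^ (a 0) := by
  rw [Gval_rec ha]
  have h1 : 0 < Gval (sh a) := by
    calc (0:ℝ) < 1 / 2 ^ (sh a 0) := by positivity
    _ ≤ Gval (sh a) := Gval_ge ha.sh
  have hp := pow_pos' (a 0)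
  have : 0 < Gval (sh a) / 2 ^ (a 0) := div_pos h1 hp
  linarith

lemma Gval_gt (ha : Good a) : 1 / 2 ^ (a 0) < Gval a := by
  rw [Gval_rec ha, ← sub_div]
  have h1 : Gval (sh a) < 1 := by
    calc Gval (sh a) < 2 / 2 ^ (sh a 0) := Gval_lt ha.sh
    _ ≤ 2 / 2 := by gcongr; exact two_le_pow (ha.sh.one_le 0)
    _ = 1 := by norm_num
  gcongr
  linarith

lemma Gval_lt_of_digit_lt (ha : Good a) (hb : Good b) (hlt : a 0 < b 0) :
    Gval b < Gval a := by
  calc Gval b < 2 / 2 ^ (b 0) := Gval_lt hb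
  _ ≤ 1 / 2 ^ (a 0) := by
      rw [div_le_div_iff₀ (pow_pos' _) (pow_pos' _)]
      calc (2:ℝ) * 2 ^ (a 0) = 2 ^ (a 0 + 1) := by ring
      _ ≤ 2 ^ (b 0) := pow_le_pow_right₀ one_le_two hlt
      _ = 1 * 2 ^ (b 0) := (one_mul _).symm
  _ < Gval a := Gval_gt ha

lemma Gval_digit_eq (ha : Good a) (hb : Good b) (h : Gval a = Gval b) : a 0 = b 0 := by
  by_contra hne
  rcases Nat.lt_or_ge (a 0) (b 0) with hlt | hge
  · have := Gval_lt_of_digit_lt ha hb hlt; linarith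
  · have := Gval_lt_of_digit_lt hb ha (lt_of_le_of_ne hge (Ne.symm hne)); linarith

lemma Gval_shift_eq (ha : Good a) (hb : Good b) (h : Gval a = Gval b) (h0 : a 0 = b 0) :
    Gval (sh a) = Gval (sh b) := by
  have ra := Gval_rec ha
  have rb := Gval_rec hb
  rw [h0] at ra
  rw [h, rb] at ra
  have hp := pow_pos' (b 0)
  field_simp at ra
  linarith

lemma Gval_inj (ha : Good a) (hb : Good b) (h : Gval a = Gval b) : a = b := by
  funext n
  induction n generalizing a b with
  | zero => exact Gval_digit_eq ha hb h
  | succ n ih =>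
      have h0 := Gval_digit_eq ha hb h
      exact ih ha.sh hb.sh (Gval_shift_eq ha hb h h0)

lemma finCF_succ (n : ℕ) (a : ℕ → ℕ) : finCF (n+1) a = 1 / ((a 0 : ℝ) + finCF n (sh a)) := rfl

lemma one_le_digit (ha : Good a) (i : ℕ) : (1:ℝ) ≤ (a i : ℝ) := by
  exact_mod_cast ha.one_le i

lemma digit_le_nine (ha : Good a) (i : ℕ) : (a i : ℝ) ≤ 9 := by
  exact_mod_cast ha.le_nine i

lemma finCF_bounds (n : ℕ) : ∀ a : ℕ → ℕ, Good a → 0 ≤ finCF n a ∧ finCF n a ≤ 1 := by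
  induction n with
  | zero => intro a _; simp [finCF]
  | succ n ih =>
      intro a ha
      obtain ⟨h0, h1⟩ := ih (sh a) ha.sh
      have hd1 : (1:ℝ) ≤ (a 0 : ℝ) + finCF n (sh a) := by
        have := one_le_digit ha 0; linarith
      have hdpos : (0:ℝ) < (a 0 : ℝ) + finCF n (sh a) := by linarith
      rw [finCF_succ]
      constructor
      · positivity
      · rw [div_le_one hdpos]; linarith

lemma finCF_lb (ha : Good a) (n : ℕ) : 1/10 ≤ finCF (n+1) a := by
  obtain ⟨h0, h1⟩ := finCF_bounds n (sh a) ha.sh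
  have h9 := digit_le_nine ha 0
  have hd : (a 0 : ℝ) + finCF n (sh a) ≤ 10 := by linarith
  have hdpos : (0:ℝ) < (a 0 : ℝ) + finCF n (sh a) := by
    have := one_le_digit ha 0; linarith
  rw [finCF_succ]
  rw [div_le_div_iff₀ (by norm_num) hdpos]
  linarith

lemma finCF_diff (n : ℕ) : ∀ a : ℕ → ℕ, Good a →
    |finCF (n+1) a - finCF n a| ≤ (10/11 : ℝ)^n := by
  induction n with
  | zero =>
      intro a ha
      have h1 := one_le_digit ha 0
      have : finCF 1 a = 1 / ((a 0 : ℝ)) := by rw [finCF_succ]; simp [finCF]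
      rw [this]
      show |1 / (a 0 : ℝ) - 0| ≤ 1
      rw [sub_zero, abs_of_pos (by positivity)]
      rw [div_le_one (by linarith)]; linarith
  | succ n ih =>
      intro a ha
      set u := finCF (n+1) (sh a) with hu
      set v := finCF n (sh a) with hv
      have hub : 1/10 ≤ u := finCF_lb ha.sh n
      have hvb : 0 ≤ v := (finCF_bounds n (sh a) ha.sh).1
      have h1 := one_le_digit ha 0
      have hDu : (0:ℝ) < (a 0 : ℝ) + u := by linarith
      have hDv : (0:ℝ) < (a 0 : ℝ) + v := by linarith
      have e1 : finCF (n+2) a = 1/((a 0 : ℝ) + u) := by rw [finCF_succ (n+1) a, ← hu]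
      have e2 : finCF (n+1) a = 1/((a 0 : ℝ) + v) := by rw [finCF_succ n a, ← hv]
      have key : finCF (n+2) a - finCF (n+1) a = (v - u) / (((a 0 : ℝ) + u) * ((a 0 : ℝ) + v)) := by
        rw [e1, e2]
        field_simp
        ring
      have hDpos : (0:ℝ) < ((a 0 : ℝ) + u) * ((a 0 : ℝ) + v) := by positivity
      rw [key, abs_div, abs_of_pos hDpos, abs_sub_comm]
      have hden : (11/10 : ℝ) ≤ ((a 0 : ℝ) + u) * ((a 0 : ℝ) + v) := by nlinarith
      calc |u - v| / (((a 0 : ℝ) + u) * ((a 0 : ℝ) + v))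
          ≤ (10/11 : ℝ)^n / (11/10) := by
            apply div_le_div₀ (by positivity) (ih (sh a) ha.sh) (by norm_num) hden
      _ = (10/11 : ℝ)^(n+1) := by ring

lemma finCF_conv (ha : Good a) : ∃ x : ℝ, Tendsto (fun n => finCF n a) atTop (𝓝 x) := by
  apply cauchySeq_tendsto_of_complete
  apply cauchySeq_of_le_geometric (10/11 : ℝ) 1 (by norm_num)
  intro n
  rw [Real.dist_eq, abs_sub_comm, one_mul]
  exact finCF_diff n a ha

lemma tendsto_lb (ha : Good a) (hx : Tendsto (fun n => finCF n a) atTop (𝓝 x)) :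
    1/10 ≤ x ∧ x ≤ 1 := by
  constructor
  · apply ge_of_tendsto hx
    filter_upwards [eventually_ge_atTop 1] with n hn
    obtain ⟨m, rfl⟩ := Nat.exists_eq_add_of_le' hn
    exact finCF_lb ha m
  · apply le_of_tendsto hx
    filter_upwards with n
    exact (finCF_bounds n a ha).2

lemma tendsto_shift (ha : Good a) (hx : Tendsto (fun n => finCF n a) atTop (𝓝 x)) :
    ∃ x' : ℝ, Tendsto (fun n => finCF n (sh a)) atTop (𝓝 x') ∧
      x = 1/((a 0:ℝ) + x') ∧ 1/10 ≤ x' ∧ x' ≤ 1 := by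
  obtain ⟨x', hx'⟩ := finCF_conv ha.sh
  obtain ⟨hb1, hb2⟩ := tendsto_lb ha.sh hx'
  have hne : (a 0:ℝ) + x' ≠ 0 := by
    have := one_le_digit ha 0; intro h; linarith
  have h2 : Tendsto (fun n => 1/((a 0:ℝ) + finCF n (sh a))) atTop (𝓝 (1/((a 0:ℝ) + x'))) :=
    Tendsto.div tendsto_const_nhds (tendsto_const_nhds.add hx') hne
  have h3 : Tendsto (fun n => finCF (n+1) a) atTop (𝓝 x) :=
    hx.comp (tendsto_add_atTop_nat 1)
  have h4 : (fun n => finCF (n+1) a) = fun n => 1/((a 0:ℝ) + finCF n (sh a)) := by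
    funext n; exact finCF_succ n a
  rw [h4] at h3
  exact ⟨x', hx', tendsto_nhds_unique h3 h2, hb1, hb2⟩

lemma cf_head (ha : Good a) (hb : Good b)
    (hxa : Tendsto (fun n => finCF n a) atTop (𝓝 x))
    (hxb : Tendsto (fun n => finCF n b) atTop (𝓝 x)) :
    a 0 = b 0 ∧ ∃ x' : ℝ, Tendsto (fun n => finCF n (sh a)) atTop (𝓝 x') ∧
      Tendsto (fun n => finCF n (sh b)) atTop (𝓝 x') := by
  obtain ⟨x', hx', hex, hx1, hx2⟩ := tendsto_shift ha hxa
  obtain ⟨y', hy', hey, hy1, hy2⟩ := tendsto_shift hb hxb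
  have hda : (0:ℝ) < (a 0:ℝ) + x' := by have := one_le_digit ha 0; linarith
  have hdb : (0:ℝ) < (b 0:ℝ) + y' := by have := one_le_digit hb 0; linarith
  have heq : (a 0:ℝ) + x' = (b 0:ℝ) + y' := by
    have h : 1/((a 0:ℝ) + x') = 1/((b 0:ℝ) + y') := by rw [← hex, ← hey]
    field_simp at h
    linarith
  have h0 : a 0 = b 0 := by
    by_contra hne
    rcases Nat.lt_or_ge (a 0) (b 0) with hlt | hge
    · have : (a 0:ℝ) + 1 ≤ (b 0:ℝ) := by exact_mod_cast hlt
      linarith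
    · have hlt : b 0 < a 0 := lt_of_le_of_ne hge fun h => hne h.symm
      have : (b 0:ℝ) + 1 ≤ (a 0:ℝ) := by exact_mod_cast hlt
      linarith
  have hxy : x' = y' := by
    have : (a 0:ℝ) = (b 0:ℝ) := by exact_mod_cast h0
    linarith
  exact ⟨h0, x', hx', hxy ▸ hy'⟩

lemma cf_unique (ha : Good a) (hb : Good b)
    (hxa : Tendsto (fun n => finCF n a) atTop (𝓝 x))
    (hxb : Tendsto (fun n => finCF n b) atTop (𝓝 x)) : a = b := by
  funext n
  induction n generalizing a b x with
  | zero => exact (cf_head ha hb hxa hxb).1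
  | succ n ih =>
      obtain ⟨-, x', hx', hy'⟩ := cf_head ha hb hxa hxb
      exact ih ha.sh hb.sh hx' hy'

section Delta

variable {Δ : Set ℝ} (hne : Δ.Nonempty) (hc : IsCompact Δ)
  (hinv : Δ = ⋃ k ∈ Finset.Icc 1 9, (fun y : ℝ => 2 / 2 ^ k - y / 2 ^ k) '' Δ)

include hinv in
lemma f_mem {k : ℕ} (hk : k ∈ Finset.Icc 1 9) {y : ℝ} (hy : y ∈ Δ) :
    2 / 2 ^ k - y / 2 ^ k ∈ Δ := by
  rw [hinv]
  exact Set.mem_biUnion hk ⟨y, hy, rfl⟩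

include hne hc hinv in
lemma delta_bound : ∀ z ∈ Δ, |z| ≤ 2 := by
  obtain ⟨z0, hz0, hmax⟩ := hc.exists_isMaxOn hne continuous_abs.continuousOn
  have hz0' := hz0
  rw [hinv] at hz0'
  simp only [Set.mem_iUnion, Set.mem_image] at hz0'
  obtain ⟨k, hk, y, hy, hz0e⟩ := hz0'
  have hk1 : 1 ≤ k := (Finset.mem_Icc.1 hk).1
  have h2k : (2:ℝ) ≤ 2 ^ k := two_le_pow hk1
  have hp : (0:ℝ) < 2 ^ k := pow_pos' k
  have hzp : z0 * 2 ^ k = 2 - y := by rw [← hz0e]; field_simp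
  have habs : |y| ≤ |z0| := hmax hy
  have h5 : |z0| * 2 ^ k ≤ 2 + |z0| := by
    calc |z0| * 2 ^ k = |z0 * 2 ^ k| := by rw [abs_mul, abs_of_pos hp]
    _ = |2 - y| := by rw [hzp]
    _ ≤ |(2:ℝ)| + |y| := by
        rw [sub_eq_add_neg]
        exact (abs_add_le _ _).trans_eq (by rw [abs_neg])
    _ ≤ 2 + |z0| := by rw [abs_two]; linarith
  have hz02 : |z0| ≤ 2 := by nlinarith [abs_nonneg z0]
  intro z hz
  exact (hmax hz).trans hz02

include hne hc hinv in
lemma gval_close : ∀ n : ℕ, ∀ a : ℕ → ℕ, Good a → ∃ z ∈ Δ, |Gval a - z| ≤ 4 * (1/2:ℝ)^n := by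
  intro n
  induction n with
  | zero =>
      intro a ha
      obtain ⟨y0, hy0⟩ := id hne
      refine ⟨y0, hy0, ?_⟩
      have h1 := Gval_abs_le ha
      have h2 := delta_bound hne hc hinv y0 hy0
      calc |Gval a - y0| ≤ |Gval a| + |y0| := by
            rw [sub_eq_add_neg]
            exact (abs_add_le _ _).trans_eq (by rw [abs_neg])
      _ ≤ 4 * (1/2:ℝ)^0 := by norm_num; linarith
  | succ n ih =>
      intro a ha
      obtain ⟨z', hz', hd⟩ := ih (sh a) ha.sh
      refine ⟨2 / 2 ^ (a 0) - z' / 2 ^ (a 0), f_mem hinv (ha 0) hz', ?_⟩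
      have hp := pow_pos' (a 0)
      have h2k : (2:ℝ) ≤ 2 ^ (a 0) := two_le_pow (ha.one_le 0)
      have he : Gval a - (2 / 2 ^ (a 0) - z' / 2 ^ (a 0))
          = (z' - Gval (sh a)) / 2 ^ (a 0) := by
        rw [Gval_rec ha]; field_simp
        ring
      rw [he, abs_div, abs_of_pos hp, abs_sub_comm]
      calc |Gval (sh a) - z'| / 2 ^ (a 0) ≤ (4 * (1/2:ℝ)^n) / 2 :=
            div_le_div₀ (by positivity) hd (by norm_num) h2k
      _ = 4 * (1/2:ℝ)^(n+1) := by ring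

include hne hc hinv in
lemma gval_mem (ha : Good a) : Gval a ∈ Δ := by
  rw [← hc.isClosed.closure_eq]
  rw [Metric.mem_closure_iff]
  intro ε hε
  obtain ⟨n, hn⟩ := exists_pow_lt_of_lt_one (show (0:ℝ) < ε/4 by linarith) (by norm_num : (1/2:ℝ) < 1)
  obtain ⟨z, hz, hd⟩ := gval_close hne hc hinv n a ha
  refine ⟨z, hz, ?_⟩
  rw [Real.dist_eq]
  calc |Gval a - z| ≤ 4 * (1/2:ℝ)^n := hd
  _ < 4 * (ε/4) := by linarith
  _ = ε := by ring

include hne hc hinv in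
lemma delta_code {y : ℝ} (hy : y ∈ Δ) : ∃ a : ℕ → ℕ, Good a ∧ Gval a = y := by
  have hstep : ∀ z : {z // z ∈ Δ}, ∃ p : ℕ × {z // z ∈ Δ},
      p.1 ∈ Finset.Icc 1 9 ∧ (z:ℝ) = 2/2^p.1 - (p.2:ℝ)/2^p.1 := by
    rintro ⟨z, hz⟩
    rw [hinv] at hz
    simp only [Set.mem_iUnion, Set.mem_image] at hz
    obtain ⟨k, hk, w, hw, hwe⟩ := hz
    exact ⟨⟨k, ⟨w, hw⟩⟩, hk, hwe.symm⟩
  choose F hF1 hF2 using hstep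
  set seq : ℕ → {z // z ∈ Δ} := fun n => (fun z => (F z).2)^[n] ⟨y, hy⟩ with hseq
  set a : ℕ → ℕ := fun n => (F (seq n)).1 with ha'
  have hseqs : ∀ n, seq (n+1) = (F (seq n)).2 := by
    intro n
    rw [hseq]
    exact Function.iterate_succ_apply' _ _ _
  have hgood : Good a := fun i => hF1 (seq i)
  have hchain : ∀ n, (seq n : ℝ) = 2/2^(a n) - ((seq (n+1) : ℝ))/2^(a n) := by
    intro n
    rw [hseqs n]
    exact hF2 (seq n)
  have hshift : ∀ m, (fun i => a (i + 1 + m)) = (fun i => a (i + (m+1))) := by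
    intro m; funext i; congr 1; omega
  have claim : ∀ n m : ℕ, |(seq m : ℝ) - Gval (fun i => a (i + m))| ≤ 4 * (1/2:ℝ)^n := by
    intro n
    induction n with
    | zero =>
        intro m
        have h1 := delta_bound hne hc hinv _ (seq m).2
        have h2 : Good (fun i => a (i + m)) := fun i => hgood (i + m)
        have h3 := Gval_abs_le h2
        calc |(seq m : ℝ) - Gval (fun i => a (i + m))|
            ≤ |(seq m : ℝ)| + |Gval (fun i => a (i + m))| := by
              rw [sub_eq_add_neg]
              exact (abs_add_le _ _).trans_eq (by rw [abs_neg])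
        _ ≤ 4 * (1/2:ℝ)^0 := by norm_num; linarith
    | succ n ih =>
        intro m
        have h2 : Good (fun i => a (i + m)) := fun i => hgood (i + m)
        have hrec := Gval_rec h2
        have hsh : sh (fun i => a (i + m)) = (fun i => a (i + (m+1))) := by
          rw [show sh (fun i => a (i + m)) = (fun i => a (i + 1 + m)) from rfl, hshift]
        rw [hsh] at hrec
        have hp := pow_pos' (a m)
        have h2k : (2:ℝ) ≤ 2 ^ (a m) := two_le_pow (hgood.one_le m)
        have he : (seq m : ℝ) - Gval (fun i => a (i + m))
            = (Gval (fun i => a (i + (m+1))) - (seq (m+1) : ℝ)) / 2 ^ (a m) := by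
          rw [hrec, hchain m]
          simp only [Nat.zero_add]
          field_simp
          ring
        rw [he, abs_div, abs_of_pos hp]
        calc |Gval (fun i => a (i + (m+1))) - (seq (m+1) : ℝ)| / 2 ^ (a m)
            ≤ (4 * (1/2:ℝ)^n) / 2 := by
              apply div_le_div₀ (by positivity) _ (by norm_num) h2k
              rw [abs_sub_comm]
              exact ih (m+1)
        _ = 4 * (1/2:ℝ)^(n+1) := by ring
  have ha0 : (fun i => a (i + 0)) = a := by funext i; simp
  have hfinal : Gval a = y := by
    have hten : Tendsto (fun n : ℕ => 4 * (1/2:ℝ)^n) atTop (𝓝 0) := by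
      have := tendsto_pow_atTop_nhds_zero_of_lt_one (by norm_num : (0:ℝ) ≤ 1/2) (by norm_num)
      simpa using this.const_mul 4
    have hle : |y - Gval a| ≤ 0 := by
      apply ge_of_tendsto hten
      filter_upwards with n
      have := claim n 0
      rw [ha0] at this
      have hs0 : ((seq 0 : {z // z ∈ Δ}) : ℝ) = y := rfl
      rw [hs0] at this
      simpa using this
    have := abs_nonneg (y - Gval a)
    have h0 : |y - Gval a| = 0 := le_antisymm hle this
    have := abs_eq_zero.1 h0
    linarith [sub_eq_zero.1 this]
  exact ⟨a, hgood, hfinal⟩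

end Delta


theorem minkowski_bijOn_attractor (Δ : Set ℝ) (hne : Δ.Nonempty) (hc : IsCompact Δ)
    (hinv : Δ = ⋃ k ∈ Finset.Icc 1 9, (fun y : ℝ => 2 / 2 ^ k - y / 2 ^ k) '' Δ) :
    Set.BijOn G E9 Δ := by
  have hGeq : ∀ (x : ℝ) (hx : ∃ a : ℕ → ℕ, (∀ i, a i ∈ Finset.Icc 1 9) ∧
      Tendsto (fun n => finCF n a) atTop (𝓝 x)), G x = Gval hx.choose := by
    intro x hx
    simp only [G]
    rw [dif_pos hx]
  refine ⟨?_, ?_, ?_⟩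
  · intro x hx
    rw [hGeq x hx]
    exact gval_mem hne hc hinv hx.choose_spec.1
  · intro x1 h1 x2 h2 he
    rw [hGeq x1 h1, hGeq x2 h2] at he
    have hcc := Gval_inj h1.choose_spec.1 h2.choose_spec.1 he
    have t1 := h1.choose_spec.2
    have t2 := h2.choose_spec.2
    rw [hcc] at t1
    exact tendsto_nhds_unique t1 t2
  · intro y hy
    obtain ⟨a, hga, hgv⟩ := delta_code hne hc hinv hy
    obtain ⟨x, hx⟩ := finCF_conv hga
    have hxE : x ∈ E9 := ⟨a, hga, hx⟩
    refine ⟨x, hxE, ?_⟩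
    rw [hGeq x hxE]
    have hcs := hxE.choose_spec
    have hce : hxE.choose = a := cf_unique hcs.1 hga hcs.2 hx
    rw [hce, hgv]
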